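/- Let P be a polynomial of degree n over a complete discrete valuation field K, and let d be the abscissa of an extremal point of NP(P). Suppose A and A' are both divisors of P of degree d with NF(A) = NF(A') = NF(P) restricted to [0,d], and with the same leading coefficient. Then A = A'. (Uniqueness of the slope factor.) -/

import Mathlib

open Polynomial Set

noncomputable section

variable {K : Type*} [Field K]

/-- Map `WithTop ℤ` into `EReal`. -/
def toE : WithTop ℤ → EReal := WithTop.recTopCoe ⊤ (fun n => ((n : ℝ) : EReal))

@[simp] lemma toE_top : toE (⊤ : WithTop ℤ) = ⊤ := rfl
@[simp] lemma toE_coe (z : ℤ) : toE (z : WithTop ℤ) = ((z : ℝ) : EReal) := rfl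

/-- Newton function of a polynomial: the largest convex function lying below the
points `(i, val aᵢ)`, realized as the sup of affine minorants. -/
def NF (v : AddValuation K (WithTop ℤ)) (P : K[X]) (x : ℝ) : EReal :=
  sSup {y : EReal | ∃ a b : ℝ,
    (∀ i : ℕ, i ≤ P.natDegree → ((a * (i : ℝ) + b : ℝ) : EReal) ≤ toE (v (P.coeff i))) ∧
    y = ((a * x + b : ℝ) : EReal)}

/-- The invariant `b_φ(Q) = min_{0 ≤ x ≤ deg Q} (NF(Q)(x) − φ(x))`. -/
def bE (v : AddValuation K (WithTop ℤ)) (φ : ℝ → EReal) (Q : K[X]) : EReal :=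
  sInf {y : EReal | ∃ x : ℝ, 0 ≤ x ∧ x ≤ (Q.natDegree : ℝ) ∧ y = NF v Q x - φ x}

namespace Stmt8Aux

variable (v : AddValuation K (WithTop ℤ))

def vz (x : K) : ℤ := WithTop.untopD 0 (v x)

lemma coe_vz {x : K} (hx : x ≠ 0) : ((vz v x : ℤ) : WithTop ℤ) = v x := by
  have h : v x ≠ ⊤ := (AddValuation.ne_top_iff v).2 hx
  unfold vz
  lift (v x) to ℤ using h with z hz
  simp

lemma vz_mul {x y : K} (hx : x ≠ 0) (hy : y ≠ 0) :
    vz v (x * y) = vz v x + vz v y := by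
  have : ((vz v (x * y) : ℤ) : WithTop ℤ) = ((vz v x + vz v y : ℤ) : WithTop ℤ) := by
    rw [coe_vz v (mul_ne_zero hx hy), AddValuation.map_mul, ← coe_vz v hx, ← coe_vz v hy]
    push_cast
    rfl
  exact_mod_cast this

lemma v_add_eq {x y : K} (h : v x < v y) : v (x + y) = v x := by
  have h1 : v x ≤ v (x + y) := by
    have := AddValuation.map_add v x y
    rwa [min_eq_left h.le] at this
  rcases h1.lt_or_eq with h2 | h2
  · exfalso
    have h3 : x = (x + y) + (-y) := by ring
    have h4 : min (v (x + y)) (v (-y)) ≤ v ((x + y) + (-y)) := AddValuation.map_add v _ _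
    rw [AddValuation.map_neg, ← h3] at h4
    rcases min_le_iff.mp h4 with h5 | h5
    · exact absurd h5 (not_le.2 h2)
    · exact absurd h5 (not_le.2 h)
  · exact h2.symm

open Classical in
def psi (Q : K[X]) (a : ℝ) : ℝ :=
  if hQ : Q = 0 then 0
  else Q.support.inf' (Polynomial.nonempty_support_iff.2 hQ)
    (fun i => ((vz v (Q.coeff i) : ℤ) : ℝ) - a * i)

lemma psi_le {Q : K[X]} (hQ : Q ≠ 0) (a : ℝ) {i : ℕ} (hi : i ∈ Q.support) :
    psi v Q a ≤ ((vz v (Q.coeff i) : ℤ) : ℝ) - a * i := by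
  rw [psi, dif_neg hQ]
  exact Finset.inf'_le _ hi

lemma le_psi {Q : K[X]} (hQ : Q ≠ 0) (a r : ℝ)
    (h : ∀ i ∈ Q.support, r ≤ ((vz v (Q.coeff i) : ℤ) : ℝ) - a * i) :
    r ≤ psi v Q a := by
  rw [psi, dif_neg hQ]
  exact Finset.le_inf' _ _ h

lemma exists_psi_eq {Q : K[X]} (hQ : Q ≠ 0) (a : ℝ) :
    ∃ i ∈ Q.support, psi v Q a = ((vz v (Q.coeff i) : ℤ) : ℝ) - a * i := by
  rw [psi, dif_neg hQ]
  exact Finset.exists_mem_eq_inf' _ _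

open Classical in
/-- The least index of `Q` achieving the minimum defining `psi v Q a`. -/
def minIdx (Q : K[X]) (a : ℝ) : ℕ :=
  if hQ : Q = 0 then 0
  else (Q.support.filter
      (fun i => ((vz v (Q.coeff i) : ℤ) : ℝ) - a * i = psi v Q a)).min'
    (by obtain ⟨i, hi, he⟩ := exists_psi_eq v hQ a
        exact ⟨i, Finset.mem_filter.2 ⟨hi, he.symm⟩⟩)

lemma minIdx_spec {Q : K[X]} (hQ : Q ≠ 0) (a : ℝ) :
    minIdx v Q a ∈ Q.support ∧
    ((vz v (Q.coeff (minIdx v Q a)) : ℤ) : ℝ) - a * (minIdx v Q a) = psi v Q a ∧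
    ∀ i ∈ Q.support, i < minIdx v Q a →
      psi v Q a < ((vz v (Q.coeff i) : ℤ) : ℝ) - a * i := by
  classical
  rw [minIdx, dif_neg hQ]
  set s := Q.support.filter
      (fun i => ((vz v (Q.coeff i) : ℤ) : ℝ) - a * i = psi v Q a) with hs
  have hne : s.Nonempty := by
    obtain ⟨i, hi, he⟩ := exists_psi_eq v hQ a
    exact ⟨i, Finset.mem_filter.2 ⟨hi, he.symm⟩⟩
  have hmem := s.min'_mem hne
  rw [Finset.mem_filter] at hmem
  refine ⟨hmem.1, hmem.2, ?_⟩
  intro i hi hlt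
  rcases (psi_le v hQ a hi).lt_or_eq with h | h
  · exact h
  · exfalso
    have hle : s.min' hne ≤ i := s.min'_le i (Finset.mem_filter.2 ⟨hi, h.symm⟩)
    exact absurd hlt (not_lt.2 hle)

lemma psi_mul {Q R : K[X]} (hQ : Q ≠ 0) (hR : R ≠ 0) (a : ℝ) :
    psi v (Q * R) a = psi v Q a + psi v R a := by
  classical
  have hQR : Q * R ≠ 0 := mul_ne_zero hQ hR
  apply le_antisymm
  · -- upper bound: use the distinguished coefficient k = i₀ + j₀
    obtain ⟨hi₀s, hi₀e, hi₀m⟩ := minIdx_spec v hQ a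
    obtain ⟨hj₀s, hj₀e, hj₀m⟩ := minIdx_spec v hR a
    set i₀ := minIdx v Q a
    set j₀ := minIdx v R a
    set k := i₀ + j₀ with hk
    have hx : Q.coeff i₀ * R.coeff j₀ ≠ 0 :=
      mul_ne_zero (Polynomial.mem_support_iff.1 hi₀s) (Polynomial.mem_support_iff.1 hj₀s)
    have hmem : ((i₀, j₀) : ℕ × ℕ) ∈ Finset.HasAntidiagonal.antidiagonal k := by
      simp [hk]
    have hsplit : (Q * R).coeff k
        = Q.coeff i₀ * R.coeff j₀
          + ∑ p ∈ (Finset.HasAntidiagonal.antidiagonal k).erase (i₀, j₀), Q.coeff p.1 * R.coeff p.2 := by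
      rw [Polynomial.coeff_mul]
      exact (Finset.add_sum_erase _ _ hmem).symm
    have hstrict : ∀ p ∈ (Finset.HasAntidiagonal.antidiagonal k).erase (i₀, j₀),
        v (Q.coeff i₀ * R.coeff j₀) < v (Q.coeff p.1 * R.coeff p.2) := by
      intro p hp
      rw [Finset.mem_erase] at hp
      obtain ⟨hpne, hpd⟩ := hp
      rw [Finset.HasAntidiagonal.mem_antidiagonal] at hpd
      by_cases hz : Q.coeff p.1 * R.coeff p.2 = 0
      · rw [hz, AddValuation.map_zero]
        exact lt_of_le_of_ne le_top ((AddValuation.ne_top_iff v).2 hx)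
      · have hq1 : Q.coeff p.1 ≠ 0 := fun h => hz (by rw [h, zero_mul])
        have hr1 : R.coeff p.2 ≠ 0 := fun h => hz (by rw [h, mul_zero])
        have hq1s : p.1 ∈ Q.support := Polynomial.mem_support_iff.2 hq1
        have hr1s : p.2 ∈ R.support := Polynomial.mem_support_iff.2 hr1
        -- reduce to an integer inequality via reals
        have key : (vz v (Q.coeff i₀) + vz v (R.coeff j₀) : ℤ)
            < vz v (Q.coeff p.1) + vz v (R.coeff p.2) := by
          have hreal : ((vz v (Q.coeff i₀) : ℤ) : ℝ) + ((vz v (R.coeff j₀) : ℤ) : ℝ)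
              < ((vz v (Q.coeff p.1) : ℤ) : ℝ) + ((vz v (R.coeff p.2) : ℤ) : ℝ) := by
            have hpk : (p.1 : ℝ) + (p.2 : ℝ) = (i₀ : ℝ) + (j₀ : ℝ) := by
              exact_mod_cast congrArg (Nat.cast (R := ℝ)) (hpd.trans hk)
            have ha : a * (p.1 : ℝ) + a * (p.2 : ℝ) = a * (i₀ : ℝ) + a * (j₀ : ℝ) := by
              have := congrArg (a * ·) hpk
              simpa [mul_add] using this
            rcases lt_trichotomy p.1 i₀ with hc | hc | hc
            · have h1 := hi₀m p.1 hq1s hc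
              have h2 := psi_le v hR a hr1s
              have hj : j₀ ≤ p.2 := by omega
              linarith
            · exfalso
              have : p.2 = j₀ := by omega
              exact hpne (Prod.ext hc this)
            · have hj : p.2 < j₀ := by omega
              have h1 := hj₀m p.2 hr1s hj
              have h2 := psi_le v hQ a hq1s
              linarith
          exact_mod_cast hreal
        have e1 : v (Q.coeff i₀ * R.coeff j₀)
            = ((vz v (Q.coeff i₀) + vz v (R.coeff j₀) : ℤ) : WithTop ℤ) := by
          rw [← coe_vz v hx,
            vz_mul v (Polynomial.mem_support_iff.1 hi₀s) (Polynomial.mem_support_iff.1 hj₀s)]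
        have e2 : v (Q.coeff p.1 * R.coeff p.2)
            = ((vz v (Q.coeff p.1) + vz v (R.coeff p.2) : ℤ) : WithTop ℤ) := by
          rw [← coe_vz v hz, vz_mul v hq1 hr1]
        rw [e1, e2]
        exact_mod_cast key
    have hq0 : Q.coeff i₀ ≠ 0 := Polynomial.mem_support_iff.1 hi₀s
    have hr0 : R.coeff j₀ ≠ 0 := Polynomial.mem_support_iff.1 hj₀s
    have hrest : v (Q.coeff i₀ * R.coeff j₀)
        < v (∑ p ∈ (Finset.HasAntidiagonal.antidiagonal k).erase (i₀, j₀), Q.coeff p.1 * R.coeff p.2) :=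
      AddValuation.map_lt_sum' v (lt_top_iff_ne_top.2 ((AddValuation.ne_top_iff v).2 hx)) hstrict
    have hveq : v ((Q * R).coeff k) = v (Q.coeff i₀ * R.coeff j₀) := by
      rw [hsplit]
      exact v_add_eq v hrest
    have hckne : (Q * R).coeff k ≠ 0 := by
      intro h
      rw [h, AddValuation.map_zero] at hveq
      exact ((AddValuation.ne_top_iff v).2 hx) hveq.symm
    have hvz : vz v ((Q * R).coeff k) = vz v (Q.coeff i₀) + vz v (R.coeff j₀) := by
      have h5 : ((vz v ((Q * R).coeff k) : ℤ) : WithTop ℤ)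
          = ((vz v (Q.coeff i₀) + vz v (R.coeff j₀) : ℤ) : WithTop ℤ) := by
        rw [coe_vz v hckne, hveq, ← coe_vz v hx, vz_mul v hq0 hr0]
      exact_mod_cast h5
    have hmemk : k ∈ (Q * R).support := Polynomial.mem_support_iff.2 hckne
    have hfin := psi_le v hQR a hmemk
    rw [hvz] at hfin
    push_cast at hfin
    have ha : a * (k : ℝ) = a * (i₀ : ℝ) + a * (j₀ : ℝ) := by
      have : (k : ℝ) = (i₀ : ℝ) + (j₀ : ℝ) := by exact_mod_cast congrArg (Nat.cast (R := ℝ)) hk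
      rw [this, mul_add]
    linarith [hi₀e, hj₀e]
  · -- lower bound
    apply le_psi v hQR
    intro k hk
    have hck : (Q * R).coeff k ≠ 0 := Polynomial.mem_support_iff.1 hk
    set s' := (Finset.HasAntidiagonal.antidiagonal k).filter
      (fun p => Q.coeff p.1 ≠ 0 ∧ R.coeff p.2 ≠ 0) with hs'
    have hne : s'.Nonempty := by
      by_contra hemp
      apply hck
      rw [Polynomial.coeff_mul]
      apply Finset.sum_eq_zero
      intro p hp
      by_contra hz
      have hq1 : Q.coeff p.1 ≠ 0 := fun h => hz (by rw [h, zero_mul])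
      have hr1 : R.coeff p.2 ≠ 0 := fun h => hz (by rw [h, mul_zero])
      exact hemp ⟨p, Finset.mem_filter.2 ⟨hp, hq1, hr1⟩⟩
    set T := s'.inf' hne (fun p => vz v (Q.coeff p.1) + vz v (R.coeff p.2)) with hT
    have hbound : (T : WithTop ℤ) ≤ v ((Q * R).coeff k) := by
      rw [Polynomial.coeff_mul]
      apply AddValuation.map_le_sum
      intro p hp
      by_cases hz : Q.coeff p.1 * R.coeff p.2 = 0
      · rw [hz, AddValuation.map_zero]; exact le_top
      · have hq1 : Q.coeff p.1 ≠ 0 := fun h => hz (by rw [h, zero_mul])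
        have hr1 : R.coeff p.2 ≠ 0 := fun h => hz (by rw [h, mul_zero])
        rw [← coe_vz v hz, vz_mul v hq1 hr1]
        have : T ≤ vz v (Q.coeff p.1) + vz v (R.coeff p.2) :=
          Finset.inf'_le _ (Finset.mem_filter.2 ⟨hp, hq1, hr1⟩)
        exact_mod_cast this
    have hTz : T ≤ vz v ((Q * R).coeff k) := by
      rw [← coe_vz v hck] at hbound
      exact_mod_cast hbound
    obtain ⟨p₀, hp₀, hp₀e⟩ := Finset.exists_mem_eq_inf' hne
      (fun p => vz v (Q.coeff p.1) + vz v (R.coeff p.2))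
    rw [Finset.mem_filter] at hp₀
    obtain ⟨hp₀d, hq0, hr0⟩ := hp₀
    rw [Finset.HasAntidiagonal.mem_antidiagonal] at hp₀d
    have h1 := psi_le v hQ a (i := p₀.1) (Polynomial.mem_support_iff.2 hq0)
    have h2 := psi_le v hR a (i := p₀.2) (Polynomial.mem_support_iff.2 hr0)
    have hpk : (p₀.1 : ℝ) + (p₀.2 : ℝ) = (k : ℝ) := by exact_mod_cast congrArg (Nat.cast (R := ℝ)) hp₀d
    have hTr : ((T : ℤ) : ℝ) ≤ ((vz v ((Q * R).coeff k) : ℤ) : ℝ) := by exact_mod_cast hTz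
    rw [hT, hp₀e] at hTr
    push_cast at hTr
    have ha : a * (p₀.1 : ℝ) + a * (p₀.2 : ℝ) = a * (k : ℝ) := by
      have := congrArg (a * ·) hpk
      simpa [mul_add] using this
    linarith

lemma toE_eq {x : K} (hx : x ≠ 0) : toE (v x) = (((vz v x : ℤ) : ℝ) : EReal) := by
  rw [← coe_vz v hx, toE_coe]

/-- `psi` is antitone in the slope. -/
lemma psi_antitone {Q : K[X]} (hQ : Q ≠ 0) {a a' : ℝ} (h : a ≤ a') :
    psi v Q a' ≤ psi v Q a := by
  obtain ⟨i, hi, heq⟩ := exists_psi_eq v hQ a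
  rw [heq]
  calc psi v Q a' ≤ ((vz v (Q.coeff i) : ℤ) : ℝ) - a' * i := psi_le v hQ a' hi
    _ ≤ _ := by
        have : (0:ℝ) ≤ (i:ℝ) := Nat.cast_nonneg i
        nlinarith

/-- Slope bound: `psi` decreases at rate at most `deg Q`. -/
lemma psi_slope {Q : K[X]} (hQ : Q ≠ 0) {a a' : ℝ} (h : a ≤ a') :
    psi v Q a - (a' - a) * Q.natDegree ≤ psi v Q a' := by
  apply le_psi v hQ
  intro i hi
  have h1 : psi v Q a ≤ ((vz v (Q.coeff i) : ℤ) : ℝ) - a * i := psi_le v hQ a hi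
  have h2 : (i : ℝ) ≤ (Q.natDegree : ℝ) := by
    exact_mod_cast Polynomial.le_natDegree_of_mem_supp i hi
  nlinarith


-- new material starts here
lemma NF_le_coeff {Q : K[X]} {i : ℕ} (hi : i ≤ Q.natDegree) :
    NF v Q (i : ℝ) ≤ toE (v (Q.coeff i)) := by
  apply sSup_le
  rintro y ⟨a, b, hcond, rfl⟩
  exact hcond i hi

lemma psi_le_NF {Q : K[X]} (hQ : Q ≠ 0) (a x : ℝ) :
    ((a * x + psi v Q a : ℝ) : EReal) ≤ NF v Q x := by
  apply le_sSup
  refine ⟨a, psi v Q a, ?_, rfl⟩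
  intro i hi
  by_cases hc : Q.coeff i = 0
  · rw [hc, AddValuation.map_zero, toE_top]; exact le_top
  · rw [toE_eq v hc]
    have h1 : psi v Q a ≤ ((vz v (Q.coeff i) : ℤ) : ℝ) - a * i :=
      psi_le v hQ a (Polynomial.mem_support_iff.2 hc)
    exact_mod_cast (by linarith : a * (i : ℝ) + psi v Q a ≤ ((vz v (Q.coeff i) : ℤ) : ℝ))

lemma ereal_le_of_eps (r Kc : ℝ) (V : EReal) (hK : 0 ≤ Kc)
    (h : ∀ ε : ℝ, 0 < ε → ((r - Kc * ε : ℝ) : EReal) ≤ V) : ((r : ℝ) : EReal) ≤ V := by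
  induction V using EReal.rec with
  | bot =>
    exfalso
    have := h 1 one_pos
    simp only [le_bot_iff] at this
    exact EReal.coe_ne_bot _ this
  | coe y =>
    rw [EReal.coe_le_coe_iff]
    by_contra hry
    push_neg at hry
    have hε : (0 : ℝ) < (r - y) / (Kc + 1) := div_pos (by linarith) (by linarith)
    have h2 := h _ hε
    rw [EReal.coe_le_coe_iff] at h2
    have h3 : Kc * ((r - y) / (Kc + 1)) < r - y := by
      rw [div_eq_inv_mul, ← mul_assoc]
      have h4 : Kc * (Kc + 1)⁻¹ < 1 := by
        rw [mul_inv_lt_iff₀ (by linarith)]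
        linarith
      nlinarith
    linarith
  | top => exact le_top

lemma NF_lower_left (P : K[X]) (d : ℕ) (c lam0 : ℝ)
    (hd : NF v P (d : ℝ) = ((c : ℝ) : EReal))
    (hleft : NF v P ((d : ℝ) - 1) = ((c - lam0 : ℝ) : EReal))
    {i : ℕ} (hi : i ≤ d) :
    ((c + lam0 * ((i : ℝ) - (d : ℝ)) : ℝ) : EReal) ≤ NF v P (i : ℝ) := by
  rcases eq_or_lt_of_le hi with rfl | hilt
  · have he : (c + lam0 * ((i : ℝ) - (i : ℝ)) : ℝ) = c := by ring
    rw [he, hd]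
  · apply ereal_le_of_eps _ ((d : ℝ) - (i : ℝ)) _ (sub_nonneg.2 (Nat.cast_le.2 hi))
    intro ε hε
    have hlt2 : ((c - lam0 - ε : ℝ) : EReal) < NF v P ((d : ℝ) - 1) := by
      rw [hleft]
      exact_mod_cast (by linarith : c - lam0 - ε < c - lam0)
    rw [NF] at hlt2
    obtain ⟨y, hy, hylt⟩ := lt_sSup_iff.mp hlt2
    obtain ⟨a, b, hcond, rfl⟩ := hy
    rw [EReal.coe_lt_coe_iff] at hylt
    have hub : a * (d : ℝ) + b ≤ c := by
      have h1 : ((a * (d : ℝ) + b : ℝ) : EReal) ≤ NF v P (d : ℝ) := by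
        rw [NF]
        exact le_sSup ⟨a, b, hcond, rfl⟩
      rw [hd, EReal.coe_le_coe_iff] at h1
      exact h1
    have hel : ((a * (i : ℝ) + b : ℝ) : EReal) ≤ NF v P (i : ℝ) := by
      rw [NF]
      exact le_sSup ⟨a, b, hcond, rfl⟩
    refine le_trans ?_ hel
    rw [EReal.coe_le_coe_iff]
    have hexp : a * ((d : ℝ) - 1) = a * (d : ℝ) - a := by ring
    have ha : a ≤ lam0 + ε := by linarith
    have ht : (i : ℝ) - (d : ℝ) + 1 ≤ 0 := by
      have : (i : ℝ) + 1 ≤ (d : ℝ) := by exact_mod_cast hilt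
      linarith
    have key : (lam0 + ε) * ((i : ℝ) - (d : ℝ) + 1) ≤ a * ((i : ℝ) - (d : ℝ) + 1) :=
      mul_le_mul_of_nonpos_right ha ht
    have hexp2 : a * (i : ℝ) + b = (a * ((d : ℝ) - 1) + b) + a * ((i : ℝ) - (d : ℝ) + 1) := by
      ring
    have id1 : c - lam0 - ε + (lam0 + ε) * ((i : ℝ) - (d : ℝ) + 1)
        = c + lam0 * ((i : ℝ) - (d : ℝ)) - ((d : ℝ) - (i : ℝ)) * ε := by ring
    linarith

lemma NF_lower_right (P : K[X]) (d : ℕ) (c lam1 : ℝ)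
    (hd : NF v P (d : ℝ) = ((c : ℝ) : EReal))
    (hright : NF v P ((d : ℝ) + 1) = ((c + lam1 : ℝ) : EReal))
    {i : ℕ} (hi : d ≤ i) :
    ((c + lam1 * ((i : ℝ) - (d : ℝ)) : ℝ) : EReal) ≤ NF v P (i : ℝ) := by
  rcases eq_or_lt_of_le hi with rfl | hilt
  · have he : (c + lam1 * ((d : ℝ) - (d : ℝ)) : ℝ) = c := by ring
    rw [he, hd]
  · apply ereal_le_of_eps _ ((i : ℝ) - (d : ℝ)) _ (sub_nonneg.2 (Nat.cast_le.2 hi))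
    intro ε hε
    have hlt2 : ((c + lam1 - ε : ℝ) : EReal) < NF v P ((d : ℝ) + 1) := by
      rw [hright]
      exact_mod_cast (by linarith : c + lam1 - ε < c + lam1)
    rw [NF] at hlt2
    obtain ⟨y, hy, hylt⟩ := lt_sSup_iff.mp hlt2
    obtain ⟨a, b, hcond, rfl⟩ := hy
    rw [EReal.coe_lt_coe_iff] at hylt
    have hub : a * (d : ℝ) + b ≤ c := by
      have h1 : ((a * (d : ℝ) + b : ℝ) : EReal) ≤ NF v P (d : ℝ) := by
        rw [NF]
        exact le_sSup ⟨a, b, hcond, rfl⟩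
      rw [hd, EReal.coe_le_coe_iff] at h1
      exact h1
    have hel : ((a * (i : ℝ) + b : ℝ) : EReal) ≤ NF v P (i : ℝ) := by
      rw [NF]
      exact le_sSup ⟨a, b, hcond, rfl⟩
    refine le_trans ?_ hel
    rw [EReal.coe_le_coe_iff]
    have hexp : a * ((d : ℝ) + 1) = a * (d : ℝ) + a := by ring
    have ha : lam1 - ε ≤ a := by linarith
    have ht : (0 : ℝ) ≤ (i : ℝ) - (d : ℝ) - 1 := by
      have : (d : ℝ) + 1 ≤ (i : ℝ) := by exact_mod_cast hilt
      linarith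
    have key : (lam1 - ε) * ((i : ℝ) - (d : ℝ) - 1) ≤ a * ((i : ℝ) - (d : ℝ) - 1) :=
      mul_le_mul_of_nonneg_right ha ht
    have hexp2 : a * (i : ℝ) + b = (a * ((d : ℝ) + 1) + b) + a * ((i : ℝ) - (d : ℝ) - 1) := by
      ring
    have id1 : c + lam1 - ε + (lam1 - ε) * ((i : ℝ) - (d : ℝ) - 1)
        = c + lam1 * ((i : ℝ) - (d : ℝ)) - ((i : ℝ) - (d : ℝ)) * ε := by ring
    linarith

lemma coeff_lower {Q : K[X]} {i : ℕ} (hc : Q.coeff i ≠ 0) {r : ℝ}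
    (hi : i ≤ Q.natDegree) (h : ((r : ℝ) : EReal) ≤ NF v Q (i : ℝ)) :
    r ≤ ((vz v (Q.coeff i) : ℤ) : ℝ) := by
  have h2 := h.trans (NF_le_coeff v hi)
  rw [toE_eq v hc] at h2
  exact_mod_cast h2

lemma psi_P_eq (P : K[X]) (hP : P ≠ 0) (d : ℕ) (c lam0 lam1 : ℝ)
    (hd : NF v P (d : ℝ) = ((c : ℝ) : EReal))
    (hleft : NF v P ((d : ℝ) - 1) = ((c - lam0 : ℝ) : EReal))
    (hright : NF v P ((d : ℝ) + 1) = ((c + lam1 : ℝ) : EReal))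
    {a : ℝ} (h0 : lam0 ≤ a) (h1 : a ≤ lam1) :
    psi v P a = c - a * d := by
  apply le_antisymm
  · have h2 := psi_le_NF v hP a (d : ℝ)
    rw [hd, EReal.coe_le_coe_iff] at h2
    linarith
  · apply le_psi v hP
    intro i hisup
    have hc : P.coeff i ≠ 0 := Polynomial.mem_support_iff.1 hisup
    have hin : i ≤ P.natDegree := Polynomial.le_natDegree_of_mem_supp i hisup
    rcases le_total i d with hid | hid
    · have h3 : c + lam0 * ((i : ℝ) - (d : ℝ)) ≤ ((vz v (P.coeff i) : ℤ) : ℝ) :=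
        coeff_lower v hc hin (NF_lower_left v P d c lam0 hd hleft hid)
      have h4 : (0 : ℝ) ≤ (a - lam0) * ((d : ℝ) - (i : ℝ)) :=
        mul_nonneg (by linarith) (sub_nonneg.2 (Nat.cast_le.2 hid))
      nlinarith
    · have h3 : c + lam1 * ((i : ℝ) - (d : ℝ)) ≤ ((vz v (P.coeff i) : ℤ) : ℝ) :=
        coeff_lower v hc hin (NF_lower_right v P d c lam1 hd hright hid)
      have h4 : (0 : ℝ) ≤ (lam1 - a) * ((i : ℝ) - (d : ℝ)) :=
        mul_nonneg (by linarith) (sub_nonneg.2 (Nat.cast_le.2 hid))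
      nlinarith

lemma psi_A_eq (P A : K[X]) (hA0 : A ≠ 0) (d : ℕ) (c lam0 : ℝ)
    (hd : NF v P (d : ℝ) = ((c : ℝ) : EReal))
    (hleft : NF v P ((d : ℝ) - 1) = ((c - lam0 : ℝ) : EReal))
    (hdA : A.natDegree = d)
    (hNF : ∀ x ∈ Set.Icc (0 : ℝ) (d : ℝ), NF v A x = NF v P x)
    {a : ℝ} (h0 : lam0 ≤ a) :
    psi v A a = c - a * d := by
  have hlc : A.coeff d ≠ 0 := by
    rw [← hdA, Polynomial.coeff_natDegree]
    exact Polynomial.leadingCoeff_ne_zero.2 hA0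
  have hNFAd : NF v A (d : ℝ) = ((c : ℝ) : EReal) := by
    rw [hNF (d : ℝ) ⟨Nat.cast_nonneg d, le_refl _⟩, hd]
  have hdd : d ≤ A.natDegree := hdA.ge
  have h1 : c ≤ ((vz v (A.coeff d) : ℤ) : ℝ) :=
    coeff_lower v hlc hdd hNFAd.ge
  have hdsup : d ∈ A.support := Polynomial.mem_support_iff.2 hlc
  set a₀ := A.support.sup' ⟨d, hdsup⟩
    (fun j => |((vz v (A.coeff d) : ℤ) : ℝ)| + |((vz v (A.coeff j) : ℤ) : ℝ)|) with ha₀def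
  have ha₀ : 0 ≤ a₀ := le_trans (by positivity) (Finset.le_sup' _ hdsup)
  have hpsi : ((vz v (A.coeff d) : ℤ) : ℝ) - a₀ * d ≤ psi v A a₀ := by
    apply le_psi v hA0
    intro j hj
    have hjd : j ≤ d := hdA ▸ Polynomial.le_natDegree_of_mem_supp j hj
    rcases eq_or_lt_of_le hjd with rfl | hjlt
    · linarith
    · have hb : ((vz v (A.coeff d) : ℤ) : ℝ) - ((vz v (A.coeff j) : ℤ) : ℝ) ≤ a₀ := by
        refine le_trans ?_ (Finset.le_sup' _ hj)
        have hx1 := le_abs_self ((vz v (A.coeff d) : ℤ) : ℝ)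
        have hx2 := neg_abs_le ((vz v (A.coeff j) : ℤ) : ℝ)
        linarith
      have hge1 : (1 : ℝ) ≤ (d : ℝ) - (j : ℝ) := by
        have : (j : ℝ) + 1 ≤ (d : ℝ) := by exact_mod_cast hjlt
        linarith
      have h2 : a₀ * 1 ≤ a₀ * ((d : ℝ) - (j : ℝ)) := mul_le_mul_of_nonneg_left hge1 ha₀
      have h3 : a₀ * ((d : ℝ) - (j : ℝ)) = a₀ * (d : ℝ) - a₀ * (j : ℝ) := by ring
      linarith
  have h3 := psi_le_NF v hA0 a₀ (d : ℝ)
  rw [hNFAd, EReal.coe_le_coe_iff] at h3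
  have hlcc : ((vz v (A.coeff d) : ℤ) : ℝ) = c := le_antisymm (by linarith) h1
  apply le_antisymm
  · have h4 := psi_le v hA0 a hdsup
    rw [hlcc] at h4
    linarith
  · apply le_psi v hA0
    intro j hj
    have hjd : j ≤ d := hdA ▸ Polynomial.le_natDegree_of_mem_supp j hj
    have hcj : A.coeff j ≠ 0 := Polynomial.mem_support_iff.1 hj
    have hNFj : NF v A (j : ℝ) = NF v P (j : ℝ) :=
      hNF (j : ℝ) ⟨Nat.cast_nonneg j, Nat.cast_le.2 hjd⟩
    have h4 : c + lam0 * ((j : ℝ) - (d : ℝ)) ≤ ((vz v (A.coeff j) : ℤ) : ℝ) := by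
      apply coeff_lower v hcj (hdA ▸ hjd)
      rw [hNFj]
      exact NF_lower_left v P d c lam0 hd hleft hjd
    have h5 : (0 : ℝ) ≤ (a - lam0) * ((d : ℝ) - (j : ℝ)) :=
      mul_nonneg (by linarith) (sub_nonneg.2 (Nat.cast_le.2 hjd))
    nlinarith


end Stmt8Aux

open Stmt8Aux in
/-- uniqueness of the slope factor: two divisors of `P` of degree `d`
(the abscissa of an extremal point of `NP(P)`) with Newton function `NF(P)|[0,d]`
and the same leading coefficient coincide. -/
theorem stmt8 (v : AddValuation K (WithTop ℤ)) (P : K[X]) (hP : P ≠ 0)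
    (d : ℕ) (hdn : d ≤ P.natDegree)
    (c lam0 lam1 : ℝ) (hlt : lam0 < lam1)
    (hd : NF v P (d : ℝ) = ((c : ℝ) : EReal))
    (hleft : NF v P ((d : ℝ) - 1) = ((c - lam0 : ℝ) : EReal))
    (hright : NF v P ((d : ℝ) + 1) = ((c + lam1 : ℝ) : EReal))
    (A A' : K[X]) (hA : A ∣ P) (hA' : A' ∣ P)
    (hdA : A.natDegree = d) (hdA' : A'.natDegree = d)
    (hNF : ∀ x ∈ Set.Icc (0 : ℝ) (d : ℝ), NF v A x = NF v P x)
    (hNF' : ∀ x ∈ Set.Icc (0 : ℝ) (d : ℝ), NF v A' x = NF v P x)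
    (hlead : A.leadingCoeff = A'.leadingCoeff) :
    A = A' := by
  classical
  have hA0 : A ≠ 0 := fun h => hP (zero_dvd_iff.mp (h ▸ hA))
  have hA'0 : A' ≠ 0 := fun h => hP (zero_dvd_iff.mp (h ▸ hA'))
  -- the lcm and the factorizations
  set L := EuclideanDomain.lcm A A' with hLdef
  have hLP : L ∣ P := EuclideanDomain.lcm_dvd hA hA'
  have hL0 : L ≠ 0 := fun h => hP (zero_dvd_iff.mp (h ▸ hLP))
  obtain ⟨CC, hCC⟩ : A ∣ L := EuclideanDomain.dvd_lcm_left A A'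
  have hC0 : CC ≠ 0 := right_ne_zero_of_mul (hCC ▸ hL0)
  have hLAA' : L ∣ A * A' :=
    EuclideanDomain.lcm_dvd (Dvd.intro _ rfl) (Dvd.intro_left _ rfl)
  have hCA' : CC ∣ A' := by
    have h := hCC ▸ hLAA'
    exact (mul_dvd_mul_iff_left hA0).1 h
  obtain ⟨B, hB⟩ := hCA'
  have hB0 : B ≠ 0 := right_ne_zero_of_mul (hB ▸ hA'0)
  obtain ⟨M, hM⟩ := hLP
  rw [hCC] at hM
  have hM0 : M ≠ 0 := right_ne_zero_of_mul (hM ▸ hP)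
  -- psi values
  have hPsiP0 : psi v P lam0 = c - lam0 * d :=
    psi_P_eq v P hP d c lam0 lam1 hd hleft hright le_rfl hlt.le
  have hPsiP1 : psi v P lam1 = c - lam1 * d :=
    psi_P_eq v P hP d c lam0 lam1 hd hleft hright hlt.le le_rfl
  have hPsiA0 : psi v A lam0 = c - lam0 * d :=
    psi_A_eq v P A hA0 d c lam0 hd hleft hdA hNF le_rfl
  have hPsiA1 : psi v A lam1 = c - lam1 * d :=
    psi_A_eq v P A hA0 d c lam0 hd hleft hdA hNF hlt.le
  have hPsiA'0 : psi v A' lam0 = c - lam0 * d :=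
    psi_A_eq v P A' hA'0 d c lam0 hd hleft hdA' hNF' le_rfl
  have hPsiA'1 : psi v A' lam1 = c - lam1 * d :=
    psi_A_eq v P A' hA'0 d c lam0 hd hleft hdA' hNF' hlt.le
  -- multiplicativity
  have e0 : psi v P lam0 = psi v A lam0 + psi v CC lam0 + psi v M lam0 := by
    rw [hM, psi_mul v (mul_ne_zero hA0 hC0) hM0 lam0, psi_mul v hA0 hC0 lam0]
  have e1 : psi v P lam1 = psi v A lam1 + psi v CC lam1 + psi v M lam1 := by
    rw [hM, psi_mul v (mul_ne_zero hA0 hC0) hM0 lam1, psi_mul v hA0 hC0 lam1]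
  have f0 : psi v A' lam0 = psi v CC lam0 + psi v B lam0 := by
    rw [hB, psi_mul v hC0 hB0 lam0]
  have f1 : psi v A' lam1 = psi v CC lam1 + psi v B lam1 := by
    rw [hB, psi_mul v hC0 hB0 lam1]
  have hMono : psi v M lam1 ≤ psi v M lam0 := psi_antitone v hM0 hlt.le
  have hBs : psi v B lam0 - (lam1 - lam0) * B.natDegree ≤ psi v B lam1 :=
    psi_slope v hB0 hlt.le
  -- degree bookkeeping
  have hdegB : CC.natDegree + B.natDegree = d := by
    rw [← hdA', hB, Polynomial.natDegree_mul hC0 hB0]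
  have hBd : (B.natDegree : ℝ) = (d : ℝ) - (CC.natDegree : ℝ) := by
    have : (CC.natDegree : ℝ) + (B.natDegree : ℝ) = (d : ℝ) := by exact_mod_cast hdegB
    linarith
  have hkz : CC.natDegree = 0 := by
    have hk : (CC.natDegree : ℝ) ≤ 0 := by nlinarith [hBd]
    have hk2 : (0 : ℝ) ≤ (CC.natDegree : ℝ) := Nat.cast_nonneg _
    exact_mod_cast le_antisymm hk hk2
  -- CC is a nonzero constant, hence L has degree d
  have hCCeq : CC = Polynomial.C (CC.coeff 0) := Polynomial.eq_C_of_natDegree_eq_zero hkz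
  obtain ⟨B', hB'⟩ : A' ∣ L := EuclideanDomain.dvd_lcm_right A A'
  have hB'0 : B' ≠ 0 := right_ne_zero_of_mul (hB' ▸ hL0)
  have hdegL : L.natDegree = d := by
    rw [hCC, Polynomial.natDegree_mul hA0 hC0, hkz, hdA, add_zero]
  have hdegB' : B'.natDegree = 0 := by
    have h := hdegL
    rw [hB', Polynomial.natDegree_mul hA'0 hB'0, hdA'] at h
    omega
  have hB'eq : B' = Polynomial.C (B'.coeff 0) := Polynomial.eq_C_of_natDegree_eq_zero hdegB'
  have heq : A * Polynomial.C (CC.coeff 0) = A' * Polynomial.C (B'.coeff 0) := by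
    rw [← hCCeq, ← hB'eq, ← hCC, ← hB']
  have hlc : A.leadingCoeff * CC.coeff 0 = A'.leadingCoeff * B'.coeff 0 := by
    have h := congrArg Polynomial.leadingCoeff heq
    simpa [Polynomial.leadingCoeff_mul, Polynomial.leadingCoeff_C] using h
  have hlcA' : A'.leadingCoeff ≠ 0 := Polynomial.leadingCoeff_ne_zero.2 hA'0
  have hcb : CC.coeff 0 = B'.coeff 0 := by
    rw [hlead] at hlc
    exact mul_left_cancel₀ hlcA' hlc
  rw [← hcb] at heq
  have hc0ne : Polynomial.C (CC.coeff 0) ≠ 0 := by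
    rw [← hCCeq]
    exact hC0
  exact mul_right_cancel₀ hc0ne heq
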